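/- Every polyomino consisting of exactly 5 cells is either orthogonally convex or congruent to the U-pentomino, i.e., it is the image of U₀ = {(0,0),(1,0),(2,0),(0,1),(2,1)} under a composition of a translation of ℤ×ℤ with one of the eight symmetries of the square grid (rotations by multiples of 90° and reflections). -/

import Mathlib

/-- Two cells of `ℤ × ℤ` are edge-adjacent iff they are at Euclidean distance 1. -/
def EdgeAdj (c d : ℤ × ℤ) : Prop := (c.1 - d.1).natAbs + (c.2 - d.2).natAbs = 1

/-- A polyomino: a finite nonempty edge-connected set of cells. -/
def IsPolyomino (S : Finset (ℤ × ℤ)) : Prop :=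
  S.Nonempty ∧ ∀ c ∈ S, ∀ d ∈ S,
    Relation.ReflTransGen (fun a b => a ∈ S ∧ b ∈ S ∧ EdgeAdj a b) c d

/-- `S` is y-monotone: every row of `S` is an interval of `ℤ`. -/
def YMonotone (S : Finset (ℤ × ℤ)) : Prop :=
  ∀ r a b c : ℤ, (a, r) ∈ S → (c, r) ∈ S → a ≤ b → b ≤ c → (b, r) ∈ S

/-- `S` is x-monotone: every column of `S` is an interval of `ℤ`. -/
def XMonotone (S : Finset (ℤ × ℤ)) : Prop :=
  ∀ c a b d : ℤ, (c, a) ∈ S → (c, d) ∈ S → a ≤ b → b ≤ d → (c, b) ∈ S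

/-- `S` is orthogonally convex: it is both x-monotone and y-monotone. -/
def OrthoConvex (S : Finset (ℤ × ℤ)) : Prop := XMonotone S ∧ YMonotone S

/-- The U-pentomino. -/
def U0 : Finset (ℤ × ℤ) := {(0, 0), (1, 0), (2, 0), (0, 1), (2, 1)}

/-- The eight symmetries of the square grid: rotations by multiples of 90° and reflections. -/
def gridSymmetries : List ((ℤ × ℤ) → (ℤ × ℤ)) :=
  [fun c => (c.1, c.2), fun c => (-c.2, c.1), fun c => (-c.1, -c.2), fun c => (c.2, -c.1),
   fun c => (-c.1, c.2), fun c => (c.1, -c.2), fun c => (c.2, c.1), fun c => (-c.2, -c.1)]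

/-! ### Auxiliary machinery -/

instance (c d : ℤ × ℤ) : Decidable (EdgeAdj c d) := by unfold EdgeAdj; infer_instance

inductive BT where
  | leaf : BT
  | node (l : BT) (v : ℕ) (r : BT) : BT

def BT.toList : BT → List ℕ
  | .leaf => []
  | .node l v r => l.toList ++ v :: r.toList

def BT.search : BT → ℕ → Bool
  | .leaf, _ => false
  | .node l v r, x => if x < v then l.search x else if v < x then r.search x else true

theorem BT.search_mem : ∀ t : BT, ∀ x, t.search x = true → x ∈ t.toList := by
  intro t
  induction t with
  | leaf => intro x h; simp [BT.search] at h
  | node l v r ihl ihr =>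
    intro x h
    simp only [BT.search] at h
    simp only [BT.toList, List.mem_append, List.mem_cons]
    split at h
    · exact Or.inl (ihl x h)
    · split at h
      · exact Or.inr (Or.inr (ihr x h))
      · exact Or.inr (Or.inl (by omega))

def NBR : Nat := 36984203341682486676899766166270081600753688960934417269661815972364278189245082865526638645458834108968054323881260799817825020553346549026846000674297640191124084016618288680220634382370
def T2 : BT := (BT.node (BT.node (BT.node (BT.node (BT.node (BT.node BT.leaf 3 BT.leaf) 6 BT.leaf) 12 (BT.node (BT.node BT.leaf 24 BT.leaf) 33 BT.leaf)) 66 (BT.node (BT.node (BT.node BT.leaf 96 BT.leaf) 132 BT.leaf) 192 (BT.node BT.leaf 264 BT.leaf))) 384 (BT.node (BT.node (BT.node (BT.node BT.leaf 528 BT.leaf) 768 BT.leaf) 1056 (BT.node BT.leaf 2112 BT.leaf)) 3072 (BT.node (BT.node (BT.node BT.leaf 4224 BT.leaf) 6144 BT.leaf) 8448 (BT.node BT.leaf 12288 BT.leaf)))) 16896 (BT.node (BT.node (BT.node (BT.node (BT.node BT.leaf 24576 BT.leaf) 33792 BT.leaf) 67584 (BT.node BT.leaf 98304 BT.leaf))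 135168 (BT.node (BT.node (BT.node BT.leaf 196608 BT.leaf) 270336 BT.leaf) 393216 (BT.node BT.leaf 540672 BT.leaf))) 786432 (BT.node (BT.node (BT.node (BT.node BT.leaf 1081344 BT.leaf) 2162688 BT.leaf) 3145728 (BT.node BT.leaf 4325376 BT.leaf)) 6291456 (BT.node (BT.node (BT.node BT.leaf 8650752 BT.leaf) 12582912 BT.leaf) 17301504 (BT.node BT.leaf 25165824 BT.leaf)))))
def T3 : BT := (BT.node (BT.node (BT.node (BT.node (BT.node (BT.node (BT.node BT.leaf 7 BT.leaf) 14 BT.leaf) 28 (BT.node (BT.node BT.leaf 35 BT.leaf) 67 BT.leaf)) 70 (BT.node (BT.node (BT.node BT.leaf 97 BT.leaf) 98 BT.leaf) 134 (BT.node (BT.node BT.leaf 140 BT.leaf) 194 BT.leaf))) 196 (BT.node (BT.node (BT.node (BT.node BT.leaf 224 BT.leaf) 268 BT.leaf) 280 (BT.node (BT.node BT.leaf 388 BT.leaf) 392 BT.leaf)) 448 (BT.node (BT.node (BT.node BT.leaf 536 BT.leaf) 776 BT.leaf) 784 (BT.node (BT.node BT.leaf 896 BT.leaf) 1057 BT.leaf))))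 1120 (BT.node (BT.node (BT.node (BT.node (BT.node BT.leaf 2114 BT.leaf) 2144 BT.leaf) 2240 (BT.node (BT.node BT.leaf 3104 BT.leaf) 3136 BT.leaf)) 4228 (BT.node (BT.node (BT.node BT.leaf 4288 BT.leaf) 4480 BT.leaf) 6208 (BT.node (BT.node BT.leaf 6272 BT.leaf) 7168 BT.leaf))) 8456 (BT.node (BT.node (BT.node (BT.node BT.leaf 8576 BT.leaf) 8960 BT.leaf) 12416 (BT.node (BT.node BT.leaf 12544 BT.leaf) 14336 BT.leaf)) 16912 (BT.node (BT.node (BT.node BT.leaf 17152 BT.leaf) 24832 BT.leaf) 25088 (BT.node (BT.node BT.leaf 28672 BT.leaf) 33824 BT.leaf))))) 35840 (BT.node (BT.node (BT.node (BT.node (BT.node (BT.node BT.leaf 67648 BT.leaf) 68608 BT.leaf) 71680 (BT.node (BT.node BT.leaf 99328 BT.leaf) 100352 BT.leaf)) 135296 (BT.node (BT.node (BT.node BT.leaf 137216 BT.leaf) 143360 BT.leaf) 198656 (BT.node (BT.node BT.leaf 200704 BT.leaf) 229376 BT.leaf))) 270592 (BT.node (BT.node (BT.node (BT.node BT.leaf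 274432 BT.leaf) 286720 BT.leaf) 397312 (BT.node (BT.node BT.leaf 401408 BT.leaf) 458752 BT.leaf)) 541184 (BT.node (BT.node (BT.node BT.leaf 548864 BT.leaf) 794624 BT.leaf) 802816 (BT.node (BT.node BT.leaf 917504 BT.leaf) 1082368 BT.leaf)))) 1146880 (BT.node (BT.node (BT.node (BT.node (BT.node BT.leaf 2164736 BT.leaf) 2195456 BT.leaf) 2293760 (BT.node (BT.node BT.leaf 3178496 BT.leaf) 3211264 BT.leaf)) 4329472 (BT.node (BT.node (BT.node BT.leaf 4390912 BT.leaf) 4587520 BT.leaf) 6356992 (BT.node (BT.node BT.leaf 6422528 BT.leaf) 7340032 BT.leaf))) 8658944 (BT.node (BT.node (BT.node (BT.node BT.leaf 8781824 BT.leaf) 9175040 BT.leaf) 12713984 (BT.node (BT.node BT.leaf 12845056 BT.leaf) 14680064 BT.leaf)) 17317888 (BT.node (BT.node (BT.node BT.leaf 17563648 BT.leaf) 25427968 BT.leaf) 25690112 (BT.node BT.leaf 29360128 BT.leaf))))))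
def T4 : BT := (BT.node (BT.node (BT.node (BT.node (BT.node (BT.node (BT.node (BT.node BT.leaf 15 BT.leaf) 30 (BT.node BT.leaf 39 BT.leaf)) 71 (BT.node (BT.node BT.leaf 78 BT.leaf) 99 (BT.node BT.leaf 102 BT.leaf))) 135 (BT.node (BT.node (BT.node BT.leaf 142 BT.leaf) 156 (BT.node BT.leaf 195 BT.leaf)) 198 (BT.node (BT.node BT.leaf 204 BT.leaf) 225 BT.leaf))) 226 (BT.node (BT.node (BT.node (BT.node BT.leaf 228 BT.leaf) 270 (BT.node BT.leaf 284 BT.leaf)) 390 (BT.node (BT.node BT.leaf 396 BT.leaf) 408 BT.leaf)) 450 (BT.node (BT.node (BT.node BT.leaf 452 BT.leaf) 456 (BT.node BT.leaf 480 BT.leaf)) 540 (BT.node (BT.node BT.leaf 780 BT.leaf) 792 BT.leaf)))) 900 (BT.node (BT.node (BT.node (BT.node (BT.node BT.leaf 904 BT.leaf) 912 (BT.node BT.leaf 960 BT.leaf)) 1059 (BT.node (BT.node BT.leaf 1121 BT.leaf) 1122 (BT.node BT.leaf 1248 BT.leaf))) 2115 (BT.node (BT.node (BT.node BT.leaf 2118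 BT.leaf) 2145 (BT.node BT.leaf 2146 BT.leaf)) 2242 (BT.node (BT.node BT.leaf 2244 BT.leaf) 2272 BT.leaf))) 2496 (BT.node (BT.node (BT.node (BT.node BT.leaf 3105 BT.leaf) 3138 (BT.node BT.leaf 3168 BT.leaf)) 3264 (BT.node (BT.node BT.leaf 4230 BT.leaf) 4236 BT.leaf)) 4290 (BT.node (BT.node (BT.node BT.leaf 4292 BT.leaf) 4320 (BT.node BT.leaf 4484 BT.leaf)) 4488 (BT.node (BT.node BT.leaf 4544 BT.leaf) 4992 BT.leaf))))) 6210 (BT.node (BT.node (BT.node (BT.node (BT.node (BT.node BT.leaf 6240 BT.leaf) 6276 (BT.node BT.leaf 6336 BT.leaf)) 6528 (BT.node (BT.node BT.leaf 7200 BT.leaf) 7232 (BT.node BT.leaf 7296 BT.leaf))) 8460 (BT.node (BT.node (BT.node BT.leaf 8472 BT.leaf) 8580 (BT.node BT.leaf 8584 BT.leaf)) 8640 (BT.node (BT.node BT.leaf 8968 BT.leaf) 8976 BT.leaf))) 9088 (BT.node (BT.node (BT.node (BT.node BT.leaf 12420 BT.leaf) 12480 (BT.node BT.leaf 12552 BT.leaf))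 12672 (BT.node (BT.node BT.leaf 13056 BT.leaf) 14400 BT.leaf)) 14464 (BT.node (BT.node (BT.node BT.leaf 14592 BT.leaf) 15360 (BT.node BT.leaf 16920 BT.leaf)) 17160 (BT.node (BT.node BT.leaf 17168 BT.leaf) 17280 BT.leaf)))) 24840 (BT.node (BT.node (BT.node (BT.node (BT.node BT.leaf 24960 BT.leaf) 25104 (BT.node BT.leaf 25344 BT.leaf)) 28800 (BT.node (BT.node BT.leaf 28928 BT.leaf) 29184 BT.leaf)) 30720 (BT.node (BT.node (BT.node BT.leaf 33825 BT.leaf) 33888 (BT.node BT.leaf 35872 BT.leaf)) 35904 (BT.node (BT.node BT.leaf 39936 BT.leaf) 67650 BT.leaf))) 67680 (BT.node (BT.node (BT.node (BT.node BT.leaf 67776 BT.leaf) 68640 (BT.node BT.leaf 68672 BT.leaf)) 71744 (BT.node (BT.node BT.leaf 71808 BT.leaf) 72704 BT.leaf)) 79872 (BT.node (BT.node (BT.node BT.leaf 99360 BT.leaf) 100416 (BT.node BT.leaf 101376 BT.leaf)) 104448 (BT.node (BT.node BT.leaf 135300 BT.leaf) 135360 BT.leaf)))))) 135552 (BT.node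 (BT.node (BT.node (BT.node (BT.node (BT.node (BT.node BT.leaf 137280 BT.leaf) 137344 (BT.node BT.leaf 138240 BT.leaf)) 143488 (BT.node (BT.node BT.leaf 143616 BT.leaf) 145408 (BT.node BT.leaf 159744 BT.leaf))) 198720 (BT.node (BT.node (BT.node BT.leaf 199680 BT.leaf) 200832 (BT.node BT.leaf 202752 BT.leaf)) 208896 (BT.node (BT.node BT.leaf 230400 BT.leaf) 231424 BT.leaf))) 233472 (BT.node (BT.node (BT.node (BT.node BT.leaf 270600 BT.leaf) 270720 (BT.node BT.leaf 271104 BT.leaf)) 274560 (BT.node (BT.node BT.leaf 274688 BT.leaf) 276480 BT.leaf)) 286976 (BT.node (BT.node (BT.node BT.leaf 287232 BT.leaf) 290816 (BT.node BT.leaf 397440 BT.leaf)) 399360 (BT.node (BT.node BT.leaf 401664 BT.leaf) 405504 BT.leaf)))) 417792 (BT.node (BT.node (BT.node (BT.node (BT.node BT.leaf 460800 BT.leaf) 462848 (BT.node BT.leaf 466944 BT.leaf)) 491520 (BT.node (BT.node BT.leaf 541200 BT.leaf) 541440 BT.leaf)) 549120 (BT.node (BT.node (BT.node BT.leaf 549376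 BT.leaf) 552960 (BT.node BT.leaf 794880 BT.leaf)) 798720 (BT.node (BT.node BT.leaf 803328 BT.leaf) 811008 BT.leaf))) 921600 (BT.node (BT.node (BT.node (BT.node BT.leaf 925696 BT.leaf) 933888 (BT.node BT.leaf 983040 BT.leaf)) 1082400 (BT.node (BT.node BT.leaf 1084416 BT.leaf) 1147904 BT.leaf)) 1148928 (BT.node (BT.node (BT.node BT.leaf 1277952 BT.leaf) 2164800 (BT.node BT.leaf 2165760 BT.leaf)) 2168832 (BT.node (BT.node BT.leaf 2196480 BT.leaf) 2197504 BT.leaf))))) 2295808 (BT.node (BT.node (BT.node (BT.node (BT.node (BT.node BT.leaf 2297856 BT.leaf) 2326528 (BT.node BT.leaf 2555904 BT.leaf)) 3179520 (BT.node (BT.node BT.leaf 3213312 BT.leaf) 3244032 (BT.node BT.leaf 3342336 BT.leaf))) 4329600 (BT.node (BT.node (BT.node BT.leaf 4331520 BT.leaf) 4337664 (BT.node BT.leaf 4392960 BT.leaf)) 4395008 (BT.node (BT.node BT.leaf 4423680 BT.leaf) 4591616 BT.leaf))) 4595712 (BT.node (BT.node (BT.node (BT.node BT.leaf 4653056 BT.leaf)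 5111808 (BT.node BT.leaf 6359040 BT.leaf)) 6389760 (BT.node (BT.node BT.leaf 6426624 BT.leaf) 6488064 BT.leaf)) 6684672 (BT.node (BT.node (BT.node BT.leaf 7372800 BT.leaf) 7405568 (BT.node BT.leaf 7471104 BT.leaf)) 8659200 (BT.node (BT.node BT.leaf 8663040 BT.leaf) 8675328 BT.leaf)))) 8785920 (BT.node (BT.node (BT.node (BT.node (BT.node BT.leaf 8790016 BT.leaf) 8847360 (BT.node BT.leaf 9183232 BT.leaf)) 9191424 (BT.node (BT.node BT.leaf 9306112 BT.leaf) 12718080 BT.leaf)) 12779520 (BT.node (BT.node (BT.node BT.leaf 12853248 BT.leaf) 12976128 (BT.node BT.leaf 13369344 BT.leaf)) 14745600 (BT.node (BT.node BT.leaf 14811136 BT.leaf) 14942208 BT.leaf))) 15728640 (BT.node (BT.node (BT.node (BT.node BT.leaf 17318400 BT.leaf) 17326080 (BT.node BT.leaf 17571840 BT.leaf)) 17580032 (BT.node (BT.node BT.leaf 17694720 BT.leaf) 25436160 BT.leaf)) 25559040 (BT.node (BT.node (BT.node BT.leaf 25706496 BT.leaf) 25952256 (BT.node BT.leaf 29491200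 BT.leaf)) 29622272 (BT.node (BT.node BT.leaf 29884416 BT.leaf) 31457280 BT.leaf)))))))
def TRIPLES : List (Nat × Nat × (Int × Int)) := [(167, 0, ((0:Int), (0:Int))), (229, 2, ((2:Int), (1:Int))), (334, 0, ((1:Int), (0:Int))), (458, 2, ((3:Int), (1:Int))), (668, 0, ((2:Int), (0:Int))), (916, 2, ((4:Int), (1:Int))), (3107, 3, ((0:Int), (2:Int))), (3139, 1, ((1:Int), (0:Int))), (5344, 0, ((0:Int), (1:Int))), (6214, 3, ((1:Int), (2:Int))), (6278, 1, ((2:Int), (0:Int))), (7328, 2, ((2:Int), (2:Int))), (10688, 0, ((1:Int), (1:Int))), (12428, 3, ((2:Int), (2:Int))), (12556, 1, ((3:Int), (0:Int))), (14656, 2, ((3:Int), (2:Int))), (21376, 0, ((2:Int), (1:Int))), (24856, 3, ((3:Int), (2:Int))), (25112, 1, ((4:Int), (0:Int))), (29312, 2, ((4:Int), (2:Int))), (99424, 3, ((0:Int), (3:Int))), (100448, 1, ((1:Int), (1:Int))), (171008, 0, ((0:Int), (2:Int))), (198848, 3, ((1:Int), (3:Int))), (200896, 1, ((2:Int), (1:Int))),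 (234496, 2, ((2:Int), (3:Int))), (342016, 0, ((1:Int), (2:Int))), (397696, 3, ((2:Int), (3:Int))), (401792, 1, ((3:Int), (1:Int))), (468992, 2, ((3:Int), (3:Int))), (684032, 0, ((2:Int), (2:Int))), (795392, 3, ((3:Int), (3:Int))), (803584, 1, ((4:Int), (1:Int))), (937984, 2, ((4:Int), (3:Int))), (3181568, 3, ((0:Int), (4:Int))), (3214336, 1, ((1:Int), (2:Int))), (5472256, 0, ((0:Int), (3:Int))), (6363136, 3, ((1:Int), (4:Int))), (6428672, 1, ((2:Int), (2:Int))), (7503872, 2, ((2:Int), (4:Int))), (10944512, 0, ((1:Int), (3:Int))), (12726272, 3, ((2:Int), (4:Int))), (12857344, 1, ((3:Int), (2:Int))), (15007744, 2, ((3:Int), (4:Int))), (21889024, 0, ((2:Int), (3:Int))), (25452544, 3, ((3:Int), (4:Int))), (25714688, 1, ((4:Int), (2:Int))), (30015488, 2, ((4:Int), (4:Int)))]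


def nbrMask (i : ℕ) : ℕ := NBR >>> (25*i) &&& 33554431
def good (m i : ℕ) : Bool := !m.testBit i && (nbrMask i &&& m != 0)
def intervalB (p : ℕ) : Bool := p == 0 || (let l := p - (p &&& (p-1)); let q := p / l; (q &&& (q+1)) == 0)
def colPat (m c : ℕ) : ℕ :=
  (m >>> c) % 2 + 2*((m >>> (c+5)) % 2) + 4*((m >>> (c+10)) % 2) + 8*((m >>> (c+15)) % 2) + 16*((m >>> (c+20)) % 2)
def chk (m : ℕ) : Bool :=
  ((List.range 5).all fun r => intervalB ((m >>> (5*r)) % 32) && intervalB (colPat m r)) || TRIPLES.any (fun t => t.1 == m)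

def L1 : List ℕ := (List.range 25).map (2 ^ ·)
def L2 : List ℕ := T2.toList
def L3 : List ℕ := T3.toList
def L4 : List ℕ := T4.toList

set_option maxRecDepth 100000 in
set_option maxHeartbeats 4000000 in
theorem c1 : (L1.all fun m => (List.range 25).all fun i => !good m i || T2.search (m ||| 2^i)) = true := by decide
set_option maxRecDepth 100000 in
set_option maxHeartbeats 4000000 in
theorem c2 : (L2.all fun m => (List.range 25).all fun i => !good m i || T3.search (m ||| 2^i)) = true := by decide
set_option maxRecDepth 100000 in
set_option maxHeartbeats 4000000 in
theorem c3 : (L3.all fun m => (List.range 25).all fun i => !good m i || T4.search (m ||| 2^i)) = true := by decide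
set_option maxRecDepth 100000 in
set_option maxHeartbeats 4000000 in
theorem c4 : (L4.all fun m => (List.range 25).all fun i => !good m i || chk (m ||| 2^i)) = true := by decide

/-! ### Decoding bitmasks to cell sets -/

def cellOf (i : ℕ) : ℤ × ℤ := (((i % 5 : ℕ) : ℤ), ((i / 5 : ℕ) : ℤ))
def decode (m : ℕ) : Finset (ℤ × ℤ) := (Finset.range 25).filter (fun i => m.testBit i) |>.image cellOf
def idx (p : ℤ × ℤ) : ℕ := p.2.toNat * 5 + p.1.toNat
noncomputable def grid : Finset (ℤ × ℤ) := Finset.Icc (0, 0) (4, 4)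

theorem mem_grid {p : ℤ × ℤ} : p ∈ grid ↔ 0 ≤ p.1 ∧ p.1 ≤ 4 ∧ 0 ≤ p.2 ∧ p.2 ≤ 4 := by
  cases p with | mk a b =>
  simp [grid, Finset.mem_Icc, Prod.le_def]; tauto

theorem mem_decode {p : ℤ × ℤ} {m : ℕ} : p ∈ decode m ↔ ∃ i < 25, m.testBit i ∧ cellOf i = p := by
  simp [decode, Finset.mem_image, Finset.mem_filter, Finset.mem_range]
  tauto

theorem cellOf_idx {p : ℤ × ℤ} (hp : p ∈ grid) : cellOf (idx p) = p ∧ idx p < 25 := by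
  rw [mem_grid] at hp
  cases p with | mk a b =>
  simp only [cellOf, idx]
  simp only at hp
  refine ⟨Prod.ext ?_ ?_, by omega⟩ <;> simp <;> omega

theorem idx_cellOf {i : ℕ} (hi : i < 25) : idx (cellOf i) = i := by
  simp [idx, cellOf]; omega

theorem cellOf_mem_grid {i : ℕ} (hi : i < 25) : cellOf i ∈ grid := by
  rw [mem_grid]; simp [cellOf]; omega

theorem decode_subset_grid (m : ℕ) : decode m ⊆ grid := by
  intro p hp
  rw [mem_decode] at hp
  obtain ⟨i, hi, _, rfl⟩ := hp
  exact cellOf_mem_grid hi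

theorem decode_or {m : ℕ} {i : ℕ} (hi : i < 25) :
    decode (m ||| 2^i) = insert (cellOf i) (decode m) := by
  ext p
  rw [mem_decode, Finset.mem_insert, mem_decode]
  constructor
  · rintro ⟨j, hj, hbit, rfl⟩
    rw [Nat.testBit_or, Nat.testBit_two_pow] at hbit
    rcases Bool.or_eq_true_iff.1 hbit with h | h
    · exact Or.inr ⟨j, hj, h, rfl⟩
    · left; have : i = j := by simpa using h
      rw [this]
  · rintro (h | ⟨j, hj, hbit, rfl⟩)
    · exact ⟨i, hi, by simp [Nat.testBit_or, Nat.testBit_two_pow], h.symm⟩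
    · exact ⟨j, hj, by simp [Nat.testBit_or, hbit], rfl⟩

theorem decode_pow {i : ℕ} (hi : i < 25) : decode (2^i) = {cellOf i} := by
  have h0 : decode 0 = ∅ := by simp [decode]
  have := decode_or (m := 0) hi
  simpa [h0] using this

/-! ### Bit-pattern lemmas -/

theorem intervalB_spec0 : ((List.range 32).all fun p => (List.range 5).all fun a =>
    (List.range 5).all fun b => (List.range 5).all fun c =>
    !(intervalB p && Nat.ble a b && Nat.ble b c && p.testBit a && p.testBit c) || p.testBit b) = true := by
  decide

theorem intervalB_spec : ∀ p < 32, ∀ a < 5, ∀ b < 5, ∀ c < 5, intervalB p = true →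
    a ≤ b → b ≤ c → p.testBit a = true → p.testBit c = true → p.testBit b = true := by
  intro p hp a ha b hb c hc h1 h2 h3 h4 h5
  have H := intervalB_spec0
  rw [List.all_eq_true] at H
  have H := H p (List.mem_range.2 hp)
  rw [List.all_eq_true] at H
  have H := H a (List.mem_range.2 ha)
  rw [List.all_eq_true] at H
  have H := H b (List.mem_range.2 hb)
  rw [List.all_eq_true] at H
  have H := H c (List.mem_range.2 hc)
  rw [h1, h4, h5, Nat.ble_eq_true_of_le h2, Nat.ble_eq_true_of_le h3] at H
  simpa using H

theorem colPat_lt (m c : ℕ) : colPat m c < 32 := by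
  unfold colPat
  omega

theorem colPat_testBit {m c r : ℕ} (hr : r < 5) :
    (colPat m c).testBit r = m.testBit (c + 5 * r) := by
  have e : ∀ k, m.testBit k = decide (m / 2^k % 2 = 1) := by
    intro k; rw [Nat.testBit_eq_decide_div_mod_eq]
  have e2 : ∀ k, m >>> k = m / 2^k := fun k => Nat.shiftRight_eq_div_pow m k
  rw [e, Nat.testBit_eq_decide_div_mod_eq]
  unfold colPat
  rw [e2, e2, e2, e2, e2]
  interval_cases r <;> (norm_num; omega)

theorem rowPat_testBit {m r a : ℕ} (ha : a < 5) :
    ((m >>> (5 * r)) % 32).testBit a = m.testBit (5 * r + a) := by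
  have h32 : (32 : ℕ) = 2^5 := rfl
  rw [h32, Nat.testBit_mod_two_pow, Nat.testBit_shiftRight]
  simp [ha]

/-! ### Neighbour table and U table -/

set_option maxHeartbeats 1000000 in
theorem nbr_spec : ∀ i ∈ List.range 25, ∀ j ∈ List.range 25,
    EdgeAdj (cellOf i) (cellOf j) → (nbrMask j).testBit i = true := by decide

def symAt : ℕ → (ℤ × ℤ) → (ℤ × ℤ)
  | 0 => fun c => (c.1, c.2)
  | 1 => fun c => (-c.2, c.1)
  | 2 => fun c => (-c.1, -c.2)
  | 3 => fun c => (c.2, -c.1)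
  | 4 => fun c => (-c.1, c.2)
  | 5 => fun c => (c.1, -c.2)
  | 6 => fun c => (c.2, c.1)
  | _ => fun c => (-c.2, -c.1)

theorem symAt_mem {k : ℕ} (h : k < 8) : symAt k ∈ gridSymmetries := by
  unfold gridSymmetries
  interval_cases k <;> simp [symAt]

set_option maxHeartbeats 2000000 in
theorem uspec : ∀ t ∈ TRIPLES, t.2.1 < 8 ∧
    decode t.1 = U0.image (fun c => symAt t.2.1 c + t.2.2) := by decide

/-! ### chk implies the conclusion for decoded sets -/

theorem chk_spec {m : ℕ} (h : chk m = true) :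
    OrthoConvex (decode m) ∨
      ∃ f ∈ gridSymmetries, ∃ v : ℤ × ℤ, decode m = U0.image fun c => f c + v := by
  unfold chk at h
  rcases Bool.or_eq_true_iff.1 h with h | h
  · left
    rw [List.all_eq_true] at h
    have key : ∀ r < 5, intervalB ((m >>> (5*r)) % 32) = true ∧ intervalB (colPat m r) = true := by
      intro r hr
      have hh := h r (List.mem_range.2 hr)
      rw [Bool.and_eq_true] at hh
      exact hh
    constructor
    · -- XMonotone
      intro c a b d h1 h2 hab hbd
      rw [mem_decode] at h1 h2 ⊢
      obtain ⟨i, hi, hbiti, hci⟩ := h1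
      obtain ⟨j, hj, hbitj, hcj⟩ := h2
      have hic : (↑(i % 5) : ℤ) = c ∧ (↑(i / 5) : ℤ) = a := by
        rw [Prod.ext_iff] at hci; exact hci
      have hjc : (↑(j % 5) : ℤ) = c ∧ (↑(j / 5) : ℤ) = d := by
        rw [Prod.ext_iff] at hcj; exact hcj
      obtain ⟨hic1, hic2⟩ := hic
      obtain ⟨hjc1, hjc2⟩ := hjc
      have hi' : i = c.toNat + 5 * a.toNat := by omega
      have hj' : j = c.toNat + 5 * d.toNat := by omega
      have hbnd : c.toNat < 5 ∧ a.toNat < 5 ∧ d.toNat < 5 ∧ b.toNat < 5 ∧ 0 ≤ b ∧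
          a.toNat ≤ b.toNat ∧ b.toNat ≤ d.toNat := by omega
      have hcol := (key c.toNat (by omega)).2
      have hPa : (colPat m c.toNat).testBit a.toNat = true := by
        rw [colPat_testBit (by omega), ← hi']; exact hbiti
      have hPd : (colPat m c.toNat).testBit d.toNat = true := by
        rw [colPat_testBit (by omega), ← hj']; exact hbitj
      have hPb := intervalB_spec (colPat m c.toNat) (colPat_lt m c.toNat)
        a.toNat (by omega) b.toNat (by omega) d.toNat (by omega) hcol (by omega) (by omega) hPa hPd
      rw [colPat_testBit (by omega)] at hPb
      refine ⟨c.toNat + 5 * b.toNat, by omega, hPb, ?_⟩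
      simp only [cellOf]
      refine Prod.ext ?_ ?_ <;> simp <;> omega
    · -- YMonotone
      intro r a b c h1 h2 hab hbc
      rw [mem_decode] at h1 h2 ⊢
      obtain ⟨i, hi, hbiti, hci⟩ := h1
      obtain ⟨j, hj, hbitj, hcj⟩ := h2
      have hic : (↑(i % 5) : ℤ) = a ∧ (↑(i / 5) : ℤ) = r := by
        rw [Prod.ext_iff] at hci; exact hci
      have hjc : (↑(j % 5) : ℤ) = c ∧ (↑(j / 5) : ℤ) = r := by
        rw [Prod.ext_iff] at hcj; exact hcj
      obtain ⟨hic1, hic2⟩ := hic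
      obtain ⟨hjc1, hjc2⟩ := hjc
      have hi' : i = 5 * r.toNat + a.toNat := by omega
      have hj' : j = 5 * r.toNat + c.toNat := by omega
      have hbnd : r.toNat < 5 ∧ a.toNat < 5 ∧ c.toNat < 5 ∧ b.toNat < 5 ∧ 0 ≤ b ∧
          a.toNat ≤ b.toNat ∧ b.toNat ≤ c.toNat := by omega
      have hrow := (key r.toNat (by omega)).1
      have hPa : ((m >>> (5 * r.toNat)) % 32).testBit a.toNat = true := by
        rw [rowPat_testBit (by omega), ← hi']; exact hbiti
      have hPc : ((m >>> (5 * r.toNat)) % 32).testBit c.toNat = true := by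
        rw [rowPat_testBit (by omega), ← hj']; exact hbitj
      have hPb := intervalB_spec ((m >>> (5 * r.toNat)) % 32) (Nat.mod_lt _ (by norm_num))
        a.toNat (by omega) b.toNat (by omega) c.toNat (by omega) hrow (by omega) (by omega) hPa hPc
      rw [rowPat_testBit (by omega)] at hPb
      refine ⟨5 * r.toNat + b.toNat, by omega, hPb, ?_⟩
      simp only [cellOf]
      refine Prod.ext ?_ ?_ <;> simp <;> omega
  · right
    obtain ⟨t, ht, hbeq⟩ := List.any_eq_true.1 h
    have htm : t.1 = m := by simpa using hbeq
    obtain ⟨hk, heq⟩ := uspec t ht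
    exact ⟨symAt t.2.1, symAt_mem hk, t.2.2, by rw [← htm]; exact heq⟩

/-! ### Connectivity machinery -/

def AdjConnD (S : Finset (ℤ × ℤ)) : Prop :=
  ∀ T ⊆ S, T.Nonempty → T ≠ S → ∃ a ∈ T, ∃ b ∈ S, b ∉ T ∧ EdgeAdj a b

theorem poly_adjConn {S : Finset (ℤ × ℤ)} (h : IsPolyomino S) : AdjConnD S := by
  obtain ⟨hne, hconn⟩ := h
  intro T hT hTne hTS
  by_contra hcon
  push_neg at hcon
  obtain ⟨d, hdS, hdT⟩ : ∃ d ∈ S, d ∉ T := by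
    by_contra hh; push_neg at hh
    exact hTS (Finset.Subset.antisymm hT hh)
  obtain ⟨a, haT⟩ := hTne
  have hpath := hconn a (hT haT) d hdS
  have claim : ∀ x, Relation.ReflTransGen (fun a b => a ∈ S ∧ b ∈ S ∧ EdgeAdj a b) a x → x ∈ T := by
    intro x hx
    induction hx with
    | refl => exact haT
    | tail _ hstep ih =>
      by_contra hxT
      exact hcon _ ih _ hstep.2.1 hxT hstep.2.2
  exact hdT (claim d hpath)

theorem land_ne0 {x y : ℕ} {i : ℕ} (hx : x.testBit i = true) (hy : y.testBit i = true) :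
    (x &&& y != 0) = true := by
  rw [bne_iff_ne]
  intro h0
  have := congrArg (Nat.testBit · i) h0
  simp only [Nat.testBit_land, hx, hy, Nat.zero_testBit] at this
  simp at this

theorem grow_step {T R : Finset (ℤ × ℤ)} (hTg : T ⊆ grid) (hconn : AdjConnD T) (hR : R ⊆ T)
    (hne : R.Nonempty) (hRT : R ≠ T) {m : ℕ} (hdm : decode m = R) :
    ∃ b ∈ T, b ∉ R ∧ idx b < 25 ∧ good m (idx b) = true ∧
      decode (m ||| 2^(idx b)) = insert b R := by
  obtain ⟨a, haR, b, hbT, hbR, hadj⟩ := hconn R hR hne hRT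
  have hbg := hTg hbT
  have hag := hTg (hR haR)
  obtain ⟨hcb, hib⟩ := cellOf_idx hbg
  obtain ⟨hca, hia⟩ := cellOf_idx hag
  have hbita : m.testBit (idx a) = true := by
    have haD : a ∈ decode m := by rw [hdm]; exact haR
    rw [mem_decode] at haD
    obtain ⟨i, hi, hbit, hci⟩ := haD
    have : idx a = i := by rw [← hci, idx_cellOf hi]
    rw [this]; exact hbit
  have hbitb : m.testBit (idx b) = false := by
    by_contra hcontra
    rw [Bool.not_eq_false] at hcontra
    have : b ∈ decode m := mem_decode.2 ⟨idx b, hib, hcontra, hcb⟩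
    rw [hdm] at this
    exact hbR this
  have hnbr : (nbrMask (idx b)).testBit (idx a) = true := by
    apply nbr_spec (idx a) (List.mem_range.2 hia) (idx b) (List.mem_range.2 hib)
    rw [hca, hcb]; exact hadj
  refine ⟨b, hbT, hbR, hib, ?_, ?_⟩
  · unfold good
    rw [hbitb, land_ne0 hnbr hbita]
    rfl
  · rw [decode_or hib, hcb, hdm]

theorem all_step {L : List ℕ} {f : ℕ → Bool}
    (hall : (L.all fun m => (List.range 25).all fun i => !good m i || f (m ||| 2^i)) = true)
    {m i : ℕ} (hm : m ∈ L) (hi : i < 25) (hg : good m i = true) : f (m ||| 2^i) = true := by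
  rw [List.all_eq_true] at hall
  have h1 := hall m hm
  rw [List.all_eq_true] at h1
  have h2 := h1 i (List.mem_range.2 hi)
  rw [hg] at h2
  simpa using h2

theorem main_decode {T : Finset (ℤ × ℤ)} (hTg : T ⊆ grid) (hconn : AdjConnD T)
    (hcard : T.card = 5) : ∃ m, decode m = T ∧ chk m = true := by
  have hne : T.Nonempty := Finset.card_pos.1 (by omega)
  obtain ⟨a, ha⟩ := hne
  obtain ⟨hca, hia⟩ := cellOf_idx (hTg ha)
  -- level 1
  have hd1 : decode (2^(idx a)) = {a} := by rw [decode_pow hia, hca]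
  have hm1 : 2^(idx a) ∈ L1 := List.mem_map.2 ⟨idx a, List.mem_range.2 hia, rfl⟩
  have hR1sub : ({a} : Finset (ℤ × ℤ)) ⊆ T := Finset.singleton_subset_iff.2 ha
  have hR1card : ({a} : Finset (ℤ × ℤ)).card = 1 := Finset.card_singleton a
  have hR1ne : ({a} : Finset (ℤ × ℤ)) ≠ T := fun h => by rw [← h] at hcard; simp at hcard
  -- level 2
  obtain ⟨b2, hb2T, hb2R, hi2, hg2, hd2⟩ := grow_step hTg hconn hR1sub ⟨a, Finset.mem_singleton_self a⟩ hR1ne hd1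
  have hm2 : (2^(idx a) ||| 2^(idx b2)) ∈ L2 :=
    BT.search_mem _ _ (all_step c1 hm1 hi2 hg2)
  set R2 : Finset (ℤ × ℤ) := insert b2 {a} with hR2def
  have hR2sub : R2 ⊆ T := Finset.insert_subset hb2T hR1sub
  have hR2card : R2.card = 2 := by rw [hR2def, Finset.card_insert_of_notMem hb2R, hR1card]
  have hR2ne : R2 ≠ T := fun h => by rw [← h, hR2card] at hcard; simp at hcard
  have hR2neem : R2.Nonempty := ⟨b2, Finset.mem_insert_self _ _⟩
  -- level 3
  obtain ⟨b3, hb3T, hb3R, hi3, hg3, hd3⟩ := grow_step hTg hconn hR2sub hR2neem hR2ne hd2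
  have hm3 : (2^(idx a) ||| 2^(idx b2) ||| 2^(idx b3)) ∈ L3 :=
    BT.search_mem _ _ (all_step c2 hm2 hi3 hg3)
  set R3 : Finset (ℤ × ℤ) := insert b3 R2 with hR3def
  have hR3sub : R3 ⊆ T := Finset.insert_subset hb3T hR2sub
  have hR3card : R3.card = 3 := by rw [hR3def, Finset.card_insert_of_notMem hb3R, hR2card]
  have hR3ne : R3 ≠ T := fun h => by rw [← h, hR3card] at hcard; simp at hcard
  have hR3neem : R3.Nonempty := ⟨b3, Finset.mem_insert_self _ _⟩
  -- level 4
  obtain ⟨b4, hb4T, hb4R, hi4, hg4, hd4⟩ := grow_step hTg hconn hR3sub hR3neem hR3ne hd3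
  have hm4 : (2^(idx a) ||| 2^(idx b2) ||| 2^(idx b3) ||| 2^(idx b4)) ∈ L4 :=
    BT.search_mem _ _ (all_step c3 hm3 hi4 hg4)
  set R4 : Finset (ℤ × ℤ) := insert b4 R3 with hR4def
  have hR4sub : R4 ⊆ T := Finset.insert_subset hb4T hR3sub
  have hR4card : R4.card = 4 := by rw [hR4def, Finset.card_insert_of_notMem hb4R, hR3card]
  have hR4ne : R4 ≠ T := fun h => by rw [← h, hR4card] at hcard; simp at hcard
  have hR4neem : R4.Nonempty := ⟨b4, Finset.mem_insert_self _ _⟩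
  -- level 5
  obtain ⟨b5, hb5T, hb5R, hi5, hg5, hd5⟩ := grow_step hTg hconn hR4sub hR4neem hR4ne hd4
  have hchk : chk (2^(idx a) ||| 2^(idx b2) ||| 2^(idx b3) ||| 2^(idx b4) ||| 2^(idx b5)) = true :=
    all_step c4 hm4 hi5 hg5
  have hR5sub : insert b5 R4 ⊆ T := Finset.insert_subset hb5T hR4sub
  have hR5card : (insert b5 R4).card = 5 := by rw [Finset.card_insert_of_notMem hb5R, hR4card]
  have hTeq : insert b5 R4 = T := Finset.eq_of_subset_of_card_le hR5sub (by omega)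
  exact ⟨_, by rw [hd5, hTeq], hchk⟩

/-! ### Translation lemmas -/

theorem EdgeAdj_translate (a b u : ℤ × ℤ) : EdgeAdj (a + u) (b + u) ↔ EdgeAdj a b := by
  unfold EdgeAdj
  simp only [Prod.fst_add, Prod.snd_add]
  rw [show a.1 + u.1 - (b.1 + u.1) = a.1 - b.1 by ring,
      show a.2 + u.2 - (b.2 + u.2) = a.2 - b.2 by ring]

theorem adjConn_image {S : Finset (ℤ × ℤ)} (h : AdjConnD S) (u : ℤ × ℤ) :
    AdjConnD (S.image (· + u)) := by
  intro T' hsub hne hneq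
  set T'' := T'.image (· + (-u)) with hT''def
  have hback : ∀ p, p ∈ T'' ↔ p + u ∈ T' := by
    intro p
    simp only [hT''def, Finset.mem_image]
    constructor
    · rintro ⟨q, hq, rfl⟩
      simpa [add_assoc] using hq
    · intro hp
      exact ⟨p + u, hp, by simp [add_assoc]⟩
  have hsub'' : T'' ⊆ S := by
    intro p hp
    rw [hback] at hp
    obtain ⟨s, hs, he⟩ := Finset.mem_image.1 (hsub hp)
    have : s = p := by
      have h1 := congrArg Prod.fst he
      have h2 := congrArg Prod.snd he
      simp only [Prod.fst_add, Prod.snd_add] at h1 h2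
      exact Prod.ext (by omega) (by omega)
    rwa [← this]
  have hne'' : T''.Nonempty := hne.image _
  have hneq'' : T'' ≠ S := by
    intro hEq
    apply hneq
    have hrecover : T' = T''.image (· + u) := by
      ext x
      simp only [Finset.mem_image]
      constructor
      · intro hx
        refine ⟨x + (-u), ?_, by simp⟩
        rw [hback]; simpa using hx
      · rintro ⟨p, hp, rfl⟩
        exact (hback p).1 hp
    rw [hrecover, hEq]
  obtain ⟨a, haT, b, hbS, hbT, hadj⟩ := h T'' hsub'' hne'' hneq''
  refine ⟨a + u, (hback a).1 haT, b + u, Finset.mem_image_of_mem _ hbS,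
    fun hc => hbT ((hback b).2 hc), (EdgeAdj_translate a b u).2 hadj⟩

/-! ### Span bound -/

theorem span_bound {S : Finset (ℤ × ℤ)} (hconn : AdjConnD S) (hcard : S.card = 5)
    (hne : S.Nonempty) (f : (ℤ × ℤ) → ℤ) (hf : f = Prod.fst ∨ f = Prod.snd) :
    ((S.image f).max' (hne.image f)) - ((S.image f).min' (hne.image f)) ≤ 4 := by
  set X := S.image f with hXdef
  have hXne : X.Nonempty := hne.image f
  set mx := X.min' hXne with hmxdef
  set Mx := X.max' hXne with hMxdef
  have key : Finset.Icc mx Mx ⊆ X := by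
    intro c hc
    rw [Finset.mem_Icc] at hc
    by_contra hcX
    obtain ⟨p, hpS, hp1⟩ := Finset.mem_image.1 (X.min'_mem hXne)
    obtain ⟨q, hqS, hq1⟩ := Finset.mem_image.1 (X.max'_mem hXne)
    have hmxc : mx < c := by
      rcases lt_or_eq_of_le hc.1 with h | h
      · exact h
      · exact absurd (h ▸ X.min'_mem hXne) hcX
    have hcMx : c < Mx := by
      rcases lt_or_eq_of_le hc.2 with h | h
      · exact h
      · exact absurd (h ▸ X.max'_mem hXne) hcX
    set W := S.filter (fun r => f r < c) with hWdef
    have hWsub : W ⊆ S := Finset.filter_subset _ _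
    have hpW : p ∈ W := Finset.mem_filter.2 ⟨hpS, by rw [hp1]; exact hmxc⟩
    have hqW : q ∉ W := by
      rw [Finset.mem_filter]
      rintro ⟨-, h⟩
      rw [hq1] at h; omega
    have hWS : W ≠ S := fun h => hqW (h ▸ hqS)
    obtain ⟨a', ha'W, b', hb'S, hb'W, hadj⟩ := hconn W hWsub ⟨p, hpW⟩ hWS
    have h1 : f a' < c := (Finset.mem_filter.1 ha'W).2
    have h2 : ¬ f b' < c := fun hcon => hb'W (Finset.mem_filter.2 ⟨hb'S, hcon⟩)
    have h3 : f b' ≠ c := fun hcon => hcX (Finset.mem_image.2 ⟨b', hb'S, hcon⟩)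
    unfold EdgeAdj at hadj
    rcases hf with rfl | rfl
    · have h4 : a'.2 - b'.2 = 0 ∨ a'.1 - b'.1 = 0 := by omega
      omega
    · omega
  have hcard2 : (Finset.Icc mx Mx).card ≤ X.card := Finset.card_le_card key
  have hX5 : X.card ≤ 5 := hcard ▸ Finset.card_image_le
  rw [Int.card_Icc] at hcard2
  omega

/-! ### Membership transfer for translated sets -/

theorem ortho_transfer {T S : Finset (ℤ × ℤ)} (v : ℤ × ℤ) (hS : S = T.image (· + v))
    (h : OrthoConvex T) : OrthoConvex S := by
  have hmem : ∀ x y : ℤ, (x, y) ∈ S ↔ (x - v.1, y - v.2) ∈ T := by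
    intro x y
    rw [hS, Finset.mem_image]
    constructor
    · rintro ⟨p, hp, he⟩
      have h1 := congrArg Prod.fst he
      have h2 := congrArg Prod.snd he
      simp only [Prod.fst_add, Prod.snd_add] at h1 h2
      have : p = (x - v.1, y - v.2) := Prod.ext (by omega) (by omega)
      rwa [← this]
    · intro hp
      refine ⟨(x - v.1, y - v.2), hp, ?_⟩
      have : ((x - v.1, y - v.2) : ℤ × ℤ) + v = (x - v.1 + v.1, y - v.2 + v.2) := rfl
      rw [this]
      refine Prod.ext ?_ ?_ <;> simp
  obtain ⟨hX, hY⟩ := h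
  constructor
  · intro c a b d h1 h2 hab hbd
    rw [hmem] at h1 h2 ⊢
    exact hX (c - v.1) (a - v.2) (b - v.2) (d - v.2) h1 h2 (by omega) (by omega)
  · intro r a b c h1 h2 hab hbc
    rw [hmem] at h1 h2 ⊢
    exact hY (r - v.2) (a - v.1) (b - v.1) (c - v.1) h1 h2 (by omega) (by omega)

/-- Every pentomino is either orthogonally convex or congruent to the U-pentomino
(an image of `U0` under a grid symmetry followed by a translation). -/
theorem pentomino_orthoConvex_or_U (S : Finset (ℤ × ℤ))
    (hpoly : IsPolyomino S) (hcard : S.card = 5) :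
    OrthoConvex S ∨
      ∃ f ∈ gridSymmetries, ∃ v : ℤ × ℤ, S = U0.image fun c => f c + v := by
  have hconn := poly_adjConn hpoly
  have hne := hpoly.1
  set mx := (S.image Prod.fst).min' (hne.image _) with hmxdef
  set my := (S.image Prod.snd).min' (hne.image _) with hmydef
  set v : ℤ × ℤ := (mx, my) with hvdef
  set T := S.image (· + (-v)) with hTdef
  have hST : S = T.image (· + v) := by
    rw [hTdef, Finset.image_image]
    have : ((· + v) ∘ (· + (-v))) = (id : ℤ × ℤ → ℤ × ℤ) := by
      funext p; simp [add_assoc]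
    rw [this, Finset.image_id]
  have hTcard : T.card = 5 := by
    rw [hTdef, Finset.card_image_of_injective _ (add_left_injective (-v)), hcard]
  have hTconn : AdjConnD T := adjConn_image hconn (-v)
  have hTgrid : T ⊆ grid := by
    intro p hp
    rw [hTdef] at hp
    obtain ⟨q, hqS, rfl⟩ := Finset.mem_image.1 hp
    have hq1 : mx ≤ q.1 := Finset.min'_le _ _ (Finset.mem_image_of_mem _ hqS)
    have hq1' : q.1 ≤ (S.image Prod.fst).max' (hne.image _) :=
      Finset.le_max' _ _ (Finset.mem_image_of_mem _ hqS)
    have hq2 : my ≤ q.2 := Finset.min'_le _ _ (Finset.mem_image_of_mem _ hqS)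
    have hq2' : q.2 ≤ (S.image Prod.snd).max' (hne.image _) :=
      Finset.le_max' _ _ (Finset.mem_image_of_mem _ hqS)
    have hs1 := span_bound hconn hcard hne Prod.fst (Or.inl rfl)
    have hs2 := span_bound hconn hcard hne Prod.snd (Or.inr rfl)
    rw [mem_grid]
    have e1 : (q + (-v)).1 = q.1 - mx := by simp [hvdef]; ring
    have e2 : (q + (-v)).2 = q.2 - my := by simp [hvdef]; ring
    rw [e1, e2]
    omega
  obtain ⟨m, hdm, hchk⟩ := main_decode hTgrid hTconn hTcard
  rcases chk_spec hchk with h | ⟨f, hf, w, hw⟩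
  · left
    exact ortho_transfer v hST (hdm ▸ h)
  · right
    refine ⟨f, hf, w + v, ?_⟩
    rw [hST, ← hdm, hw, Finset.image_image]
    congr 1
    funext c
    simp [add_assoc]
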